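/- For A = {a,b,c} and the profile σ with k voters ranking a≻b≻c, k voters ranking a≻c≻b, and k voters ranking b≻c≻a, where k ≥ 2, the expected Kendall-Tau disagreement of veto across a random split satisfies E[KT(f_v(σ^(1)), f_v(σ^(2)))] ≥ 1.5; combined with the bound E[KT(f_p(σ^(1)), f_p(σ^(2)))] ≤ 1.3125, it follows that AbC({f_p, f_v}, σ) = {f_p}. -/

import Mathlib

open scoped Classical

noncomputable section

/-- A strict ranking of the alternatives `A` among `m` positions: each alternative is
assigned its (0-indexed) position. -/
abbrev Ranking (A : Type*) (m : ℕ) := A ≃ Fin m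

/-- A weak ranking: a complete and transitive binary relation (ties allowed).
`ge a b` means `a` is ranked weakly above `b`. -/
structure WeakRanking (A : Type*) where
  ge : A → A → Prop
  total : ∀ a b, ge a b ∨ ge b a
  trans : ∀ a b c, ge a b → ge b c → ge a c

namespace WeakRanking

variable {A : Type*}

/-- `a` is ranked strictly above `b`. -/
def strict (r : WeakRanking A) (a b : A) : Prop := r.ge a b ∧ ¬ r.ge b a

/-- `a` and `b` are tied. -/
def tied (r : WeakRanking A) (a b : A) : Prop := r.ge a b ∧ r.ge b a

/-- The reversed weak ranking. -/
def rev (r : WeakRanking A) : WeakRanking A where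
  ge a b := r.ge b a
  total a b := r.total b a
  trans _ _ _ h1 h2 := r.trans _ _ _ h2 h1

/-- The all-tied weak ranking. -/
def allTied (A : Type*) : WeakRanking A :=
  ⟨fun _ _ => True, fun _ _ => Or.inl trivial, fun _ _ _ _ _ => trivial⟩

end WeakRanking

variable {A : Type*} {m : ℕ}

/-- The weak ranking induced by a strict ranking (smaller position = ranked higher). -/
def Ranking.toWeak (r : Ranking A m) : WeakRanking A where
  ge a b := r a ≤ r b
  total a b := le_total _ _
  trans _ _ _ h1 h2 := le_trans h1 h2

/-- The position-reversal permutation. -/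
def finRevPerm (m : ℕ) : Equiv.Perm (Fin m) :=
  ⟨Fin.rev, Fin.rev, Fin.rev_rev, Fin.rev_rev⟩

/-- The reversed strict ranking. -/
def Ranking.revR (r : Ranking A m) : Ranking A m := r.trans (finRevPerm m)

/-- Kendall-Tau distance with ties between two weak rankings: the sum over unordered pairs
of distinct alternatives of `D + T/2`, realized as half the sum over ordered pairs. -/
def KT [Fintype A] (r1 r2 : WeakRanking A) : ℝ :=
  (∑ p ∈ Finset.univ.offDiag,
      ((if (r1.strict p.1 p.2 ∧ r2.strict p.2 p.1) ∨ (r1.strict p.2 p.1 ∧ r2.strict p.1 p.2)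
          then (1 : ℝ) else 0)
        + (if r1.tied p.1 p.2 ∨ r2.tied p.1 p.2 then (1 : ℝ) else 0) / 2)) / 2

/-- A profile: the list of the voters' strict rankings. -/
abbrev Profile (A : Type*) (m : ℕ) := List (Ranking A m)

/-- A social welfare function. -/
abbrev SWF (A : Type*) (m : ℕ) := Profile A m → WeakRanking A

/-- Reverse every voter's ranking. -/
def revProfile (σ : Profile A m) : Profile A m := σ.map Ranking.revR

/-- A monotone positional scoring vector `1 = s₁ ≥ s₂ ≥ … ≥ sₘ = 0`. -/
structure ScoreVec (m : ℕ) where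
  s : Fin m → ℝ
  anti : Antitone s
  first : ∀ h : 0 < m, s ⟨0, h⟩ = 1
  last : ∀ h : 0 < m, s ⟨m - 1, Nat.sub_lt h Nat.one_pos⟩ = 0

/-- Total score of alternative `a` in profile `σ`. -/
def totalScore (sv : ScoreVec m) (σ : Profile A m) (a : A) : ℝ :=
  (σ.map fun r => sv.s (r a)).sum

/-- The positional scoring rule associated to a scoring vector. -/
def posSWF (sv : ScoreVec m) : SWF A m := fun σ =>
  { ge := fun a b => totalScore sv σ b ≤ totalScore sv σ a
    total := fun _ _ => le_total _ _
    trans := fun _ _ _ h1 h2 => le_trans h2 h1 }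

/-- The plurality scoring vector `(1,0,…,0)`. -/
def pluralityVec (m : ℕ) (hm : 2 ≤ m) : ScoreVec m where
  s i := if i.val = 0 then 1 else 0
  anti := by
    intro i j hij
    have h' : i.val ≤ j.val := hij
    dsimp only
    by_cases hj : j.val = 0
    · have hi : i.val = 0 := by omega
      simp [hi, hj]
    · by_cases hi : i.val = 0 <;> simp [hi, hj]
  first h := by simp
  last h := by
    have h' : m - 1 ≠ 0 := by omega
    simp [h']

/-- The veto scoring vector `(1,…,1,0)`. -/
def vetoVec (m : ℕ) (hm : 2 ≤ m) : ScoreVec m where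
  s i := if i.val = m - 1 then 0 else 1
  anti := by
    intro i j hij
    have h' : i.val ≤ j.val := hij
    dsimp only
    by_cases hi : i.val = m - 1
    · have hj : j.val = m - 1 := by have := j.isLt; omega
      simp [hi, hj]
    · by_cases hj : j.val = m - 1 <;> simp [hi, hj]
  first h := by
    have h' : (0 : ℕ) ≠ m - 1 := by omega
    simp [h']
  last h := by simp

/-- The reverse scoring vector, `s'_j = 1 - s_{m+1-j}`. -/
def ScoreVec.revVec (sv : ScoreVec m) : ScoreVec m where
  s j := 1 - sv.s j.rev
  anti := by
    intro i j hij
    have h1 : j.rev ≤ i.rev := by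
      simp only [Fin.le_def, Fin.val_rev]
      have h' : i.val ≤ j.val := hij
      omega
    have h2 := sv.anti h1
    dsimp only
    linarith
  first h := by
    have h1 : (⟨0, h⟩ : Fin m).rev = ⟨m - 1, Nat.sub_lt h Nat.one_pos⟩ := by
      ext
      simp [Fin.val_rev]
    show 1 - sv.s (⟨0, h⟩ : Fin m).rev = 1
    rw [h1, sv.last h]
    ring
  last h := by
    have h1 : (⟨m - 1, Nat.sub_lt h Nat.one_pos⟩ : Fin m).rev = ⟨0, h⟩ := by
      ext
      simp only [Fin.val_rev]
      omega
    show 1 - sv.s (⟨m - 1, Nat.sub_lt h Nat.one_pos⟩ : Fin m).rev = 0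
    rw [h1, sv.first h]
    ring

/-- One side of the split of the profile `σ` given by assignment `β`. -/
def subProfile (σ : Profile A m) (β : Fin σ.length → Bool) (b : Bool) : Profile A m :=
  ((List.finRange σ.length).filter fun i => β i == b).map σ.get

/-- Apply an SWF, producing the all-tied ranking on an empty (sub)profile. -/
def applySplit (f : SWF A m) (σ : Profile A m) : WeakRanking A :=
  if σ = [] then WeakRanking.allTied A else f σ

/-- Expected Kendall-Tau disagreement of `f` between the two sides of a uniformly random
split of `σ` (each voter placed independently and uniformly on one of the two sides). -/
def expDisagree [Fintype A] (f : SWF A m) (σ : Profile A m) : ℝ :=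
  (∑ β : Fin σ.length → Bool,
      KT (applySplit f (subProfile σ β true)) (applySplit f (subProfile σ β false)))
    / 2 ^ σ.length

/-- Aggregation by Consistency over a set of SWFs: the rules minimizing expected
disagreement across a random split. -/
def AbC [Fintype A] (F : Set (SWF A m)) (σ : Profile A m) : Set (SWF A m) :=
  {f | f ∈ F ∧ ∀ g ∈ F, expDisagree f σ ≤ expDisagree g σ}

/-- Aggregation by Consistency over a set of positional scoring vectors. -/
def AbCVec [Fintype A] (F : Set (ScoreVec m)) (σ : Profile A m) : Set (ScoreVec m) :=
  {sv | sv ∈ F ∧ ∀ sv' ∈ F, expDisagree (posSWF sv) σ ≤ expDisagree (posSWF sv') σ}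

/-- All permutations of the positions that fix every position outside `S`. -/
def permsOn (S : Finset (Fin m)) : List (Equiv.Perm (Fin m)) :=
  (Finset.univ.filter fun π : Equiv.Perm (Fin m) => ∀ i ∉ S, π i = i).toList

/-- The `k`-shuffling of profile `σ` with respect to the set of positions `S`: each voter's
ranking is replaced by `k·m!` copies, split evenly among the `|S|!` permutations of `S`. -/
def shuffle (S : Finset (Fin m)) (k : ℕ) (σ : Profile A m) : Profile A m :=
  σ.flatMap fun r =>
    (permsOn S).flatMap fun π =>
      List.replicate (k * Nat.factorial m / Nat.factorial S.card) (r.trans π)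

/-- The positions `2,…,m` (0-indexed: `1,…,m-1`). -/
def tailPositions (m : ℕ) : Finset (Fin m) := Finset.univ.filter fun i => 1 ≤ i.val

/-- Number of voters ranking `a` first. -/
def topCount (σ : Profile A m) (a : A) : ℕ := σ.countP fun r => (r a).val == 0

/-- A weak ranking has no ties among distinct alternatives. -/
def NoTies (w : WeakRanking A) : Prop := ∀ a b : A, a ≠ b → ¬ w.tied a b

/-- Probability (over a uniformly random split of `σ`) that the outputs of `f` on the two
sides order `a` and `b` strictly oppositely. -/
def probD [Fintype A] (f : SWF A m) (σ : Profile A m) (a b : A) : ℝ :=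
  ((Finset.univ.filter fun β : Fin σ.length → Bool =>
      ((applySplit f (subProfile σ β true)).strict a b ∧
        (applySplit f (subProfile σ β false)).strict b a) ∨
      ((applySplit f (subProfile σ β true)).strict b a ∧
        (applySplit f (subProfile σ β false)).strict a b)).card : ℝ) / 2 ^ σ.length

/-- Probability (over a uniformly random split of `σ`) that `a` and `b` are tied in the
output of `f` on at least one side. -/
def probT [Fintype A] (f : SWF A m) (σ : Profile A m) (a b : A) : ℝ :=
  ((Finset.univ.filter fun β : Fin σ.length → Bool =>
      (applySplit f (subProfile σ β true)).tied a b ∨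
      (applySplit f (subProfile σ β false)).tied a b).card : ℝ) / 2 ^ σ.length

/-- A rule picking rule over sets of positional scoring vectors. -/
abbrev RPRVec (A : Type*) (m : ℕ) := Set (ScoreVec m) → Profile A m → Set (ScoreVec m)

/-- An RPR returns a nonempty subset of the candidate rules. -/
def IsRPR (Z : RPRVec A m) : Prop := ∀ F σ, Z F σ ⊆ F ∧ (Z F σ).Nonempty

/-- Anonymity of an RPR: invariance under permuting voters. -/
def AnonymousRPR (Z : RPRVec A m) : Prop :=
  ∀ (F : Set (ScoreVec m)) (σ σ' : Profile A m), σ.Perm σ' → Z F σ = Z F σ'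

/-- Reversal symmetry of an RPR. -/
def ReversalSymmetric (Z : RPRVec A m) : Prop :=
  ∀ F : Set (ScoreVec m), ScoreVec.revVec '' F = F →
    ∀ σ : Profile A m, ScoreVec.revVec '' (Z F σ) = Z F (revProfile σ)

/-- Plurality-shuffling consistency of an RPR. -/
def PSConsistent (hm : 2 ≤ m) (Z : RPRVec A m) : Prop :=
  ∀ F : Set (ScoreVec m), F.Finite → pluralityVec m hm ∈ F →
    ∀ σ : Profile A m, NoTies (posSWF (pluralityVec m hm) σ) →
      ∃ k : ℕ, 1 ≤ k ∧ ∀ k', k ≤ k' →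
        Z F (shuffle (tailPositions m) k' σ) = {pluralityVec m hm}

/-- Union consistency of an RPR. -/
def UnionConsistent (Z : RPRVec A m) : Prop :=
  ∀ (F : Set (ScoreVec m)) (σa σb : Profile A m), (Z F σa ∩ Z F σb).Nonempty →
    Z F (σa ++ σb) = Z F σa ∩ Z F σb

/-- The welfare-maximizing RPR with utility function `u`. -/
def welfareMax (u : Ranking A m → WeakRanking A → ℝ) : RPRVec A m := fun F σ =>
  {sv | sv ∈ F ∧ ∀ sv' ∈ F,
      (σ.map fun r => u r (posSWF sv' σ)).sum ≤ (σ.map fun r => u r (posSWF sv σ)).sum}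

/-- The SWF induced by a (vector-valued) RPR, where it is singleton-valued. -/
def inducedVec (Z : RPRVec A m) (F : Set (ScoreVec m)) : SWF A m := fun σ =>
  if h : ∃ sv, Z F σ = {sv} then posSWF h.choose σ else WeakRanking.allTied A

/-- The SWF induced by an (SWF-valued) RPR, where it is singleton-valued. -/
def inducedSWF (Z : Set (SWF A m) → Profile A m → Set (SWF A m)) (F : Set (SWF A m)) :
    SWF A m := fun σ =>
  if h : ∃ f, Z F σ = {f} then h.choose σ else WeakRanking.allTied A

/-- The SWF induced by AbC over scoring vectors. -/
def inducedAbCVec [Fintype A] (F : Set (ScoreVec m)) : SWF A m := fun σ =>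
  if h : ∃ sv, AbCVec F σ = {sv} then posSWF h.choose σ else WeakRanking.allTied A

/-- Anonymity of an SWF. -/
def AnonymousSWF (f : SWF A m) : Prop :=
  ∀ σ σ' : Profile A m, σ.Perm σ' → f σ = f σ'

/-- Relabeling of a weak ranking along a permutation of the alternatives. -/
def permuteWeak (π : Equiv.Perm A) (w : WeakRanking A) : WeakRanking A where
  ge a b := w.ge (π.symm a) (π.symm b)
  total a b := w.total _ _
  trans _ _ _ h1 h2 := w.trans _ _ _ h1 h2

/-- Neutrality of an SWF: permuting the alternatives permutes the output accordingly. -/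
def NeutralSWF (f : SWF A m) : Prop :=
  ∀ (π : Equiv.Perm A) (σ : Profile A m),
    f (σ.map fun r => π.symm.trans r) = permuteWeak π (f σ)

/-- `a` pairwise defeats `b` in profile `σ`. -/
def pairwiseDefeats (σ : Profile A m) (a b : A) : Prop :=
  (σ.countP fun r => decide (r b < r a)) < (σ.countP fun r => decide (r a < r b))

/-- A set `S` is dominant if every member pairwise defeats every non-member. -/
def DominantSet [Fintype A] (σ : Profile A m) (S : Finset A) : Prop :=
  ∀ a ∈ S, ∀ b ∉ S, pairwiseDefeats σ a b

/-- The Smith set: the smallest dominant set (the intersection of all dominant sets). -/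
def SmithSet [Fintype A] (σ : Profile A m) : Finset A :=
  Finset.univ.filter fun a => ∀ S : Finset A, DominantSet σ S → a ∈ S

/-- `a` is among the top-ranked alternatives of `w`. -/
def isTop (w : WeakRanking A) (a : A) : Prop := ∀ b, w.ge a b

def SmithCriterion [Fintype A] (f : SWF A m) : Prop :=
  ∀ (σ : Profile A m) (a : A), isTop (f σ) a → a ∈ SmithSet σ

def CondorcetConsistent [Fintype A] (f : SWF A m) : Prop :=
  ∀ (σ : Profile A m) (c : A), SmithSet σ = {c} →
    ∀ a, isTop (f σ) a → a ∈ SmithSet σ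

def MajorityWinnerCriterion [Fintype A] (f : SWF A m) : Prop :=
  ∀ (σ : Profile A m) (c : A), SmithSet σ = {c} → σ.length < 2 * topCount σ c →
    ∀ a, isTop (f σ) a → a ∈ SmithSet σ

def PairwiseMajorityConsistent (f : SWF A m) : Prop :=
  ∀ (σ : Profile A m) (r : WeakRanking A),
    (∀ a b, r.strict a b ↔ pairwiseDefeats σ a b) → f σ = r

def UnanimousSWF (f : SWF A m) : Prop :=
  ∀ (σ : Profile A m) (r : Ranking A m), σ ≠ [] → (∀ x ∈ σ, x = r) →
    f σ = Ranking.toWeak r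

/-- Rank of `a` in weak ranking `w`: one plus the number of alternatives strictly above. -/
def rankIn [Fintype A] (w : WeakRanking A) (a : A) : ℕ :=
  1 + (Finset.univ.filter fun b => w.strict b a).card

/-- `r'` is obtained from `r` by (weakly) raising `a`, everything else unchanged. -/
def RaisesWeak (a : A) (r r' : Ranking A m) : Prop :=
  r' a ≤ r a ∧ ∀ b c : A, b ≠ a → c ≠ a → (r b < r c ↔ r' b < r' c)

/-- Monotonicity of an SWF: raising an alternative never hurts its rank. -/
def MonotonicSWF [Fintype A] (f : SWF A m) : Prop :=
  ∀ (a : A) (σ σ' : Profile A m), List.Forall₂ (RaisesWeak a) σ σ' →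
    rankIn (f σ') a ≤ rankIn (f σ) a

/-- Total score of `a` for a list of (position ↦ alternative) ballots of length `ℓ`. -/
def ballotScore [Fintype A] {ℓ : ℕ} (sv : ScoreVec ℓ) (P : List (Fin ℓ → A)) (a : A) : ℝ :=
  (P.map fun b => ∑ i : Fin ℓ, if b i = a then sv.s i else 0).sum

/-- A scoring vector achieves perfect consistency on the given split `(P1, P2)`. -/
def PerfectConsistency [Fintype A] {ℓ : ℕ} (sv : ScoreVec ℓ)
    (P1 P2 : List (Fin ℓ → A)) : Prop :=
  ∀ a b : A, a ≠ b →
    0 < (ballotScore sv P1 a - ballotScore sv P1 b) *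
        (ballotScore sv P2 a - ballotScore sv P2 b)

/-- Complete a `k`-partial ballot to a full ballot on `m` positions by placing the missing
alternatives at the bottom, in a fixed order. -/
def completeBallot [Fintype A] [LinearOrder A] {k m : ℕ} (hk : 0 < k)
    (b : Fin k → A) : Fin m → A := fun j =>
  if h : j.val < k then b ⟨j.val, h⟩
  else ((Finset.univ \ Finset.univ.image b).sort (· ≤ ·)).getD (j.val - k) (b ⟨0, hk⟩)

/-- `k`-shuffling for (position ↦ alternative) ballots. -/
def shuffleBallots {m : ℕ} (S : Finset (Fin m)) (k : ℕ) (P : List (Fin m → A)) :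
    List (Fin m → A) :=
  P.flatMap fun f =>
    (permsOn S).flatMap fun π =>
      List.replicate (k * Nat.factorial m / Nat.factorial S.card) (f ∘ π.symm)


-- Concrete setup for STATEMENTS 13 and 14: alternatives `A = Fin 3` with `a = 0`,
-- `b = 1`, `c = 2`; rankings are given as (alternative ↦ position) bijections.

/-- a ≻ b ≻ c -/
def rABC : Ranking (Fin 3) 3 := Equiv.ofBijective ![0, 1, 2] (by decide)
/-- a ≻ c ≻ b -/
def rACB : Ranking (Fin 3) 3 := Equiv.ofBijective ![0, 2, 1] (by decide)
/-- b ≻ c ≻ a -/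
def rBCA : Ranking (Fin 3) 3 := Equiv.ofBijective ![2, 0, 1] (by decide)

/-- The profile with k voters a≻b≻c, k voters a≻c≻b, and k voters b≻c≻a. -/
def sigmaK (k : ℕ) : Profile (Fin 3) 3 :=
  List.replicate k rABC ++ List.replicate k rACB ++ List.replicate k rBCA


/-! ### Auxiliary lemmas for STATEMENT 14 -/

section Aux14

lemma list_sum_filter_map {ι : Type*} (l : List ι) (p : ι → Bool) (f : ι → ℝ) :
    ((l.filter p).map f).sum = (l.map fun i => if p i then f i else 0).sum := by
  induction l with
  | nil => simp
  | cons hd tl ih => by_cases h : p hd <;> simp [List.filter_cons, h, ih]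

lemma totalScore_eq_sum {A : Type*} {m : ℕ} (sv : ScoreVec m) (σ : Profile A m) (a : A) :
    totalScore sv σ a = ∑ i : Fin σ.length, sv.s (σ.get i a) := by
  conv_lhs => rw [totalScore, ← List.map_get_finRange σ]
  rw [List.map_map, Fin.sum_univ_def]
  rfl

lemma totalScore_subProfile {A : Type*} {m : ℕ} (sv : ScoreVec m) (σ : Profile A m)
    (β : Fin σ.length → Bool) (t : Bool) (a : A) :
    totalScore sv (subProfile σ β t) a
      = ∑ i : Fin σ.length, if β i = t then sv.s (σ.get i a) else 0 := by
  rw [totalScore, subProfile, List.map_map, list_sum_filter_map, Fin.sum_univ_def]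
  simp

lemma totalScore_split {A : Type*} {m : ℕ} (sv : ScoreVec m) (σ : Profile A m)
    (β : Fin σ.length → Bool) (a : A) :
    totalScore sv (subProfile σ β true) a + totalScore sv (subProfile σ β false) a
      = totalScore sv σ a := by
  rw [totalScore_subProfile, totalScore_subProfile, totalScore_eq_sum,
    ← Finset.sum_add_distrib]
  refine Finset.sum_congr rfl fun i _ => ?_
  cases h : β i <;> simp [h]

lemma scoreVec_nonneg {m : ℕ} (sv : ScoreVec m) (i : Fin m) : 0 ≤ sv.s i := by
  have h0 : 0 < m := i.pos
  have hle : i ≤ (⟨m - 1, Nat.sub_lt h0 Nat.one_pos⟩ : Fin m) := by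
    simp only [Fin.le_def]
    have := i.isLt
    omega
  have := sv.anti hle
  rw [sv.last h0] at this
  exact this

lemma totalScore_nonneg {A : Type*} {m : ℕ} (sv : ScoreVec m) (σ : Profile A m) (a : A) :
    0 ≤ totalScore sv σ a := by
  rw [totalScore_eq_sum]
  exact Finset.sum_nonneg fun i _ => scoreVec_nonneg sv _

lemma applySplit_strict {A : Type*} {m : ℕ} (sv : ScoreVec m) (P : Profile A m) (a b : A) :
    (applySplit (posSWF sv) P).strict a b ↔ totalScore sv P b < totalScore sv P a := by
  rw [applySplit]
  split_ifs with h
  · subst h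
    simp [WeakRanking.strict, WeakRanking.allTied, totalScore]
  · rw [WeakRanking.strict, posSWF]
    exact (lt_iff_le_not_ge).symm

lemma applySplit_tied {A : Type*} {m : ℕ} (sv : ScoreVec m) (P : Profile A m) (a b : A) :
    (applySplit (posSWF sv) P).tied a b ↔ totalScore sv P a = totalScore sv P b := by
  rw [applySplit]
  split_ifs with h
  · subst h
    simp [WeakRanking.tied, WeakRanking.allTied, totalScore]
  · rw [WeakRanking.tied, posSWF]
    constructor
    · rintro ⟨h1, h2⟩; exact le_antisymm h2 h1
    · rintro h1; exact ⟨le_of_eq h1.symm, le_of_eq h1⟩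

lemma sigmaK_length (k : ℕ) : (sigmaK k).length = k + k + k := by
  simp [sigmaK]; omega

lemma sigmaK_get (k : ℕ) (i : Fin (sigmaK k).length) :
    (sigmaK k).get i = if i.val < k then rABC else if i.val < k + k then rACB else rBCA := by
  have hi : i.val < k + k + k := by
    have := i.isLt
    have hlen := sigmaK_length k
    omega
  rw [List.get_eq_getElem]
  simp only [sigmaK]
  split_ifs with h1 h2
  · rw [List.getElem_append_left (by simp only [List.length_append, List.length_replicate]; omega),
      List.getElem_append_left (by simpa), List.getElem_replicate]
  · rw [List.getElem_append_left (by simp only [List.length_append, List.length_replicate]; omega),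
      List.getElem_append_right (by simpa using h1), List.getElem_replicate]
  · rw [List.getElem_append_right (by simp only [List.length_append, List.length_replicate]; omega),
      List.getElem_replicate]

lemma plur_weight_a (hm : 2 ≤ 3) (k : ℕ) (i : Fin (sigmaK k).length) :
    (pluralityVec 3 hm).s ((sigmaK k).get i 0) = if i.val < k + k then 1 else 0 := by
  rw [sigmaK_get]
  split_ifs with h1 h2 h3 h4 <;> first
    | (exfalso; omega)
    | (norm_num [pluralityVec, show rABC 0 = 0 from rfl, show rACB 0 = 0 from rfl,
        show rBCA 0 = 2 from rfl] <;> decide)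

lemma plur_weight_b (hm : 2 ≤ 3) (k : ℕ) (i : Fin (sigmaK k).length) :
    (pluralityVec 3 hm).s ((sigmaK k).get i 1) = if k + k ≤ i.val then 1 else 0 := by
  rw [sigmaK_get]
  split_ifs with h1 h2 h3 h4 <;> first
    | (exfalso; omega)
    | (norm_num [pluralityVec, show rABC 1 = 1 from rfl, show rACB 1 = 2 from rfl,
        show rBCA 1 = 0 from rfl] <;> decide)

lemma plur_weight_c (hm : 2 ≤ 3) (k : ℕ) (i : Fin (sigmaK k).length) :
    (pluralityVec 3 hm).s ((sigmaK k).get i 2) = 0 := by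
  rw [sigmaK_get]
  split_ifs <;>
    norm_num [pluralityVec, show rABC 2 = 2 from rfl, show rACB 2 = 1 from rfl,
      show rBCA 2 = 1 from rfl] <;> decide

lemma veto_total (hm : 2 ≤ 3) (k : ℕ) (x : Fin 3) :
    totalScore (vetoVec 3 hm) (sigmaK k) x = (k : ℝ) + k := by
  rw [totalScore, sigmaK]
  fin_cases x <;>
    simp [vetoVec, show rABC 0 = 0 from rfl, show rACB 0 = 0 from rfl,
      show rBCA 0 = 2 from rfl, show rABC 1 = 1 from rfl, show rACB 1 = 2 from rfl,
      show rBCA 1 = 0 from rfl, show rABC 2 = 2 from rfl, show rACB 2 = 1 from rfl,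
      show rBCA 2 = 1 from rfl, List.sum_replicate]

lemma plur_score_a (hm : 2 ≤ 3) (k : ℕ) (β : Fin (sigmaK k).length → Bool) (t : Bool) :
    totalScore (pluralityVec 3 hm) (subProfile (sigmaK k) β t) 0
      = ∑ i : Fin (sigmaK k).length, if β i = t ∧ i.val < k + k then (1 : ℝ) else 0 := by
  rw [totalScore_subProfile]
  refine Finset.sum_congr rfl fun i _ => ?_
  rw [plur_weight_a hm]
  split_ifs <;> tauto

lemma plur_score_b (hm : 2 ≤ 3) (k : ℕ) (β : Fin (sigmaK k).length → Bool) (t : Bool) :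
    totalScore (pluralityVec 3 hm) (subProfile (sigmaK k) β t) 1
      = ∑ i : Fin (sigmaK k).length, if β i = t ∧ k + k ≤ i.val then (1 : ℝ) else 0 := by
  rw [totalScore_subProfile]
  refine Finset.sum_congr rfl fun i _ => ?_
  rw [plur_weight_b hm]
  split_ifs <;> tauto

lemma plur_score_c (hm : 2 ≤ 3) (k : ℕ) (β : Fin (sigmaK k).length → Bool) (t : Bool) :
    totalScore (pluralityVec 3 hm) (subProfile (sigmaK k) β t) 2 = 0 := by
  rw [totalScore_subProfile]
  refine Finset.sum_eq_zero fun i _ => ?_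
  rw [plur_weight_c hm]
  simp

lemma sum_ind_eq_zero_iff {n : ℕ} (P : Fin n → Prop) [DecidablePred P] :
    (∑ i : Fin n, if P i then (1 : ℝ) else 0) = 0 ↔ ∀ i, ¬ P i := by
  rw [Finset.sum_eq_zero_iff_of_nonneg (fun i _ => by positivity)]
  constructor
  · intro h i hP
    have := h i (Finset.mem_univ i)
    rw [if_pos hP] at this
    norm_num at this
  · intro h i _
    rw [if_neg (h i)]

lemma card_tail_forced (k : ℕ) (t : Bool) :
    (Finset.univ.filter fun β : Fin (sigmaK k).length → Bool =>
        ∀ i : Fin (sigmaK k).length, i.val < k + k → β i ≠ t).card ≤ 2 ^ k := by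
  have hcard : (Finset.univ : Finset (Fin k → Bool)).card = 2 ^ k := by
    simp [Fintype.card_fun]
  rw [← hcard]
  apply Finset.card_le_card_of_injOn
    (fun β (j : Fin k) => β ⟨k + k + j.val, by rw [sigmaK_length]; omega⟩)
  · intro β _
    exact Finset.mem_univ _
  · intro β1 h1 β2 h2 heq
    simp only [Finset.coe_filter, Set.mem_setOf_eq, Finset.mem_univ, true_and] at h1 h2
    funext i
    by_cases hi : i.val < k + k
    · have e1 := h1 i hi
      have e2 := h2 i hi
      revert e1 e2
      cases β1 i <;> cases β2 i <;> cases t <;> simp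
    · have hik : i.val - (k + k) < k := by
        have := i.isLt
        have hlen := sigmaK_length k
        omega
      have := congrFun heq ⟨i.val - (k + k), hik⟩
      simpa [Fin.ext_iff, show k + k + (i.val - (k + k)) = i.val by omega] using this

lemma card_head_forced (k : ℕ) (t : Bool) :
    (Finset.univ.filter fun β : Fin (sigmaK k).length → Bool =>
        ∀ i : Fin (sigmaK k).length, k + k ≤ i.val → β i ≠ t).card ≤ 2 ^ (k + k) := by
  have hcard : (Finset.univ : Finset (Fin (k + k) → Bool)).card = 2 ^ (k + k) := by
    simp [Fintype.card_fun]
  rw [← hcard]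
  apply Finset.card_le_card_of_injOn
    (fun β (j : Fin (k + k)) => β ⟨j.val, by rw [sigmaK_length]; omega⟩)
  · intro β _
    exact Finset.mem_univ _
  · intro β1 h1 β2 h2 heq
    simp only [Finset.coe_filter, Set.mem_setOf_eq, Finset.mem_univ, true_and] at h1 h2
    funext i
    by_cases hi : i.val < k + k
    · have := congrFun heq ⟨i.val, hi⟩
      simpa [Fin.ext_iff] using this
    · have e1 := h1 i (by omega)
      have e2 := h2 i (by omega)
      revert e1 e2
      cases β1 i <;> cases β2 i <;> cases t <;> simp

lemma KT_term_le_one {A : Type*} (r1 r2 : WeakRanking A) (x y : A) :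
    (if (r1.strict x y ∧ r2.strict y x) ∨ (r1.strict y x ∧ r2.strict x y) then (1 : ℝ) else 0)
      + (if r1.tied x y ∨ r2.tied x y then (1 : ℝ) else 0) / 2 ≤ 1 := by
  split_ifs with hD hT
  · exfalso
    simp only [WeakRanking.strict, WeakRanking.tied] at hD hT
    tauto
  all_goals norm_num

lemma offDiag_card3 : (Finset.univ.offDiag : Finset (Fin 3 × Fin 3)).card = 6 := by
  rw [Finset.offDiag_card]
  simp

lemma sum_offDiag3 (f : Fin 3 × Fin 3 → ℝ) :
    ∑ p ∈ (Finset.univ : Finset (Fin 3)).offDiag, f p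
      = f (0, 1) + f (1, 0) + f (0, 2) + f (2, 0) + f (1, 2) + f (2, 1) := by
  rw [show (Finset.univ : Finset (Fin 3)).offDiag
      = (Finset.univ ×ˢ Finset.univ).filter (fun p : Fin 3 × Fin 3 => p.1 ≠ p.2) from by
        ext p; simp [Finset.mem_offDiag], Finset.sum_filter]
  rw [show (Finset.univ ×ˢ Finset.univ : Finset (Fin 3 × Fin 3)) = Finset.univ from
    Finset.univ_product_univ]
  rw [Fintype.sum_prod_type]
  rw [Fin.sum_univ_three]
  rw [Fin.sum_univ_three, Fin.sum_univ_three, Fin.sum_univ_three]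
  norm_num [Fin.ext_iff]
  ring

lemma veto_pair_ge (hm : 2 ≤ 3) (k : ℕ) (β : Fin (sigmaK k).length → Bool) (x y : Fin 3) :
    (1 / 2 : ℝ) ≤
      (if ((applySplit (posSWF (vetoVec 3 hm)) (subProfile (sigmaK k) β true)).strict x y ∧
            (applySplit (posSWF (vetoVec 3 hm)) (subProfile (sigmaK k) β false)).strict y x) ∨
          ((applySplit (posSWF (vetoVec 3 hm)) (subProfile (sigmaK k) β true)).strict y x ∧
            (applySplit (posSWF (vetoVec 3 hm)) (subProfile (sigmaK k) β false)).strict x y)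
        then (1 : ℝ) else 0)
      + (if (applySplit (posSWF (vetoVec 3 hm)) (subProfile (sigmaK k) β true)).tied x y ∨
            (applySplit (posSWF (vetoVec 3 hm)) (subProfile (sigmaK k) β false)).tied x y
        then (1 : ℝ) else 0) / 2 := by
  have hsum : ∀ z : Fin 3,
      totalScore (vetoVec 3 hm) (subProfile (sigmaK k) β true) z
        + totalScore (vetoVec 3 hm) (subProfile (sigmaK k) β false) z = (k : ℝ) + k := by
    intro z
    rw [totalScore_split, veto_total]
  rcases lt_trichotomy (totalScore (vetoVec 3 hm) (subProfile (sigmaK k) β true) x)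
      (totalScore (vetoVec 3 hm) (subProfile (sigmaK k) β true) y) with hlt | heq | hgt
  · have h1 : (applySplit (posSWF (vetoVec 3 hm)) (subProfile (sigmaK k) β true)).strict y x := by
      rw [applySplit_strict]; exact hlt
    have h2 : (applySplit (posSWF (vetoVec 3 hm)) (subProfile (sigmaK k) β false)).strict x y := by
      rw [applySplit_strict]
      have e1 := hsum x
      have e2 := hsum y
      linarith
    rw [if_pos (Or.inr ⟨h1, h2⟩)]
    split_ifs <;> norm_num
  · have h1 : (applySplit (posSWF (vetoVec 3 hm)) (subProfile (sigmaK k) β true)).tied x y := by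
      rw [applySplit_tied]; exact heq
    rw [if_pos (Or.inl h1)]
    split_ifs <;> norm_num
  · have h1 : (applySplit (posSWF (vetoVec 3 hm)) (subProfile (sigmaK k) β true)).strict x y := by
      rw [applySplit_strict]; exact hgt
    have h2 : (applySplit (posSWF (vetoVec 3 hm)) (subProfile (sigmaK k) β false)).strict y x := by
      rw [applySplit_strict]
      have e1 := hsum x
      have e2 := hsum y
      linarith
    rw [if_pos (Or.inl ⟨h1, h2⟩)]
    split_ifs <;> norm_num

lemma veto_KT_ge (hm : 2 ≤ 3) (k : ℕ) (β : Fin (sigmaK k).length → Bool) :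
    (3 / 2 : ℝ) ≤ KT (applySplit (posSWF (vetoVec 3 hm)) (subProfile (sigmaK k) β true))
      (applySplit (posSWF (vetoVec 3 hm)) (subProfile (sigmaK k) β false)) := by
  rw [KT, le_div_iff₀ (by norm_num : (0:ℝ) < 2), sum_offDiag3]
  dsimp only
  have h1 := veto_pair_ge hm k β 0 1
  have h2 := veto_pair_ge hm k β 1 0
  have h3 := veto_pair_ge hm k β 0 2
  have h4 := veto_pair_ge hm k β 2 0
  have h5 := veto_pair_ge hm k β 1 2
  have h6 := veto_pair_ge hm k β 2 1
  linarith

lemma veto_exp_ge (hm : 2 ≤ 3) (k : ℕ) :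
    (3 / 2 : ℝ) ≤ expDisagree (posSWF (vetoVec 3 hm)) (sigmaK k) := by
  rw [expDisagree, le_div_iff₀ (by positivity)]
  refine le_trans (le_of_eq ?_) (Finset.card_nsmul_le_sum _ _ (3/2 : ℝ)
    (fun β _ => veto_KT_ge hm k β))
  simp only [Finset.card_univ, Fintype.card_fun, Fintype.card_bool, Fintype.card_fin,
    nsmul_eq_mul]
  push_cast
  ring

lemma plur_pair_c_le (hm : 2 ≤ 3) (k : ℕ) (β : Fin (sigmaK k).length → Bool) (x u w : Fin 3)
    (huw : (u = x ∧ w = 2) ∨ (u = 2 ∧ w = x)) :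
    (if ((applySplit (posSWF (pluralityVec 3 hm)) (subProfile (sigmaK k) β true)).strict u w ∧
          (applySplit (posSWF (pluralityVec 3 hm)) (subProfile (sigmaK k) β false)).strict w u) ∨
        ((applySplit (posSWF (pluralityVec 3 hm)) (subProfile (sigmaK k) β true)).strict w u ∧
          (applySplit (posSWF (pluralityVec 3 hm)) (subProfile (sigmaK k) β false)).strict u w)
      then (1 : ℝ) else 0)
    + (if (applySplit (posSWF (pluralityVec 3 hm)) (subProfile (sigmaK k) β true)).tied u w ∨
          (applySplit (posSWF (pluralityVec 3 hm)) (subProfile (sigmaK k) β false)).tied u w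
      then (1 : ℝ) else 0) / 2
    ≤ (if totalScore (pluralityVec 3 hm) (subProfile (sigmaK k) β true) x = 0 ∨
          totalScore (pluralityVec 3 hm) (subProfile (sigmaK k) β false) x = 0
      then (1 : ℝ) else 0) / 2 := by
  have hc : ∀ t, totalScore (pluralityVec 3 hm) (subProfile (sigmaK k) β t) 2 = 0 :=
    fun t => plur_score_c hm k β t
  have hnn : ∀ t, 0 ≤ totalScore (pluralityVec 3 hm) (subProfile (sigmaK k) β t) x :=
    fun t => totalScore_nonneg _ _ _
  have hD : ¬ (((applySplit (posSWF (pluralityVec 3 hm)) (subProfile (sigmaK k) β true)).strict u w ∧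
          (applySplit (posSWF (pluralityVec 3 hm)) (subProfile (sigmaK k) β false)).strict w u) ∨
        ((applySplit (posSWF (pluralityVec 3 hm)) (subProfile (sigmaK k) β true)).strict w u ∧
          (applySplit (posSWF (pluralityVec 3 hm)) (subProfile (sigmaK k) β false)).strict u w)) := by
    rcases huw with ⟨rfl, rfl⟩ | ⟨rfl, rfl⟩
    · rintro (⟨-, h⟩ | ⟨h, -⟩) <;> rw [applySplit_strict] at h
      · have := hnn false; have := hc false; linarith
      · have := hnn true; have := hc true; linarith
    · rintro (⟨h, -⟩ | ⟨-, h⟩) <;> rw [applySplit_strict] at h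
      · have := hnn true; have := hc true; linarith
      · have := hnn false; have := hc false; linarith
  rw [if_neg hD]
  by_cases hT : (applySplit (posSWF (pluralityVec 3 hm)) (subProfile (sigmaK k) β true)).tied u w ∨
      (applySplit (posSWF (pluralityVec 3 hm)) (subProfile (sigmaK k) β false)).tied u w
  · have hE : totalScore (pluralityVec 3 hm) (subProfile (sigmaK k) β true) x = 0 ∨
        totalScore (pluralityVec 3 hm) (subProfile (sigmaK k) β false) x = 0 := by
      rcases huw with ⟨rfl, rfl⟩ | ⟨rfl, rfl⟩ <;>
        rcases hT with h | h <;> rw [applySplit_tied] at h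
      · exact Or.inl (by rw [h, hc true])
      · exact Or.inr (by rw [h, hc false])
      · exact Or.inl (by rw [← h, hc true])
      · exact Or.inr (by rw [← h, hc false])
    rw [if_pos hT, if_pos hE]
    norm_num
  · rw [if_neg hT]
    split_ifs <;> norm_num

lemma plur_KT_le (hm : 2 ≤ 3) (k : ℕ) (β : Fin (sigmaK k).length → Bool) :
    KT (applySplit (posSWF (pluralityVec 3 hm)) (subProfile (sigmaK k) β true))
      (applySplit (posSWF (pluralityVec 3 hm)) (subProfile (sigmaK k) β false))
    ≤ 1 + (if totalScore (pluralityVec 3 hm) (subProfile (sigmaK k) β true) 0 = 0 ∨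
          totalScore (pluralityVec 3 hm) (subProfile (sigmaK k) β false) 0 = 0
        then (1 : ℝ) else 0) / 2
      + (if totalScore (pluralityVec 3 hm) (subProfile (sigmaK k) β true) 1 = 0 ∨
          totalScore (pluralityVec 3 hm) (subProfile (sigmaK k) β false) 1 = 0
        then (1 : ℝ) else 0) / 2 := by
  rw [KT, div_le_iff₀ (by norm_num : (0:ℝ) < 2), sum_offDiag3]
  dsimp only
  have h1 := KT_term_le_one (applySplit (posSWF (pluralityVec 3 hm)) (subProfile (sigmaK k) β true))
    (applySplit (posSWF (pluralityVec 3 hm)) (subProfile (sigmaK k) β false)) (0 : Fin 3) 1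
  have h2 := KT_term_le_one (applySplit (posSWF (pluralityVec 3 hm)) (subProfile (sigmaK k) β true))
    (applySplit (posSWF (pluralityVec 3 hm)) (subProfile (sigmaK k) β false)) (1 : Fin 3) 0
  have h3 := plur_pair_c_le hm k β 0 0 2 (Or.inl ⟨rfl, rfl⟩)
  have h4 := plur_pair_c_le hm k β 0 2 0 (Or.inr ⟨rfl, rfl⟩)
  have h5 := plur_pair_c_le hm k β 1 1 2 (Or.inl ⟨rfl, rfl⟩)
  have h6 := plur_pair_c_le hm k β 1 2 1 (Or.inr ⟨rfl, rfl⟩)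
  linarith

lemma card_plurA_zero (hm : 2 ≤ 3) (k : ℕ) (t : Bool) :
    (Finset.univ.filter fun β : Fin (sigmaK k).length → Bool =>
      totalScore (pluralityVec 3 hm) (subProfile (sigmaK k) β t) 0 = 0).card ≤ 2 ^ k := by
  refine le_trans (Finset.card_le_card ?_) (card_tail_forced k t)
  intro β hβ
  rw [Finset.mem_filter] at hβ ⊢
  refine ⟨hβ.1, ?_⟩
  have h0 := hβ.2
  rw [plur_score_a hm, sum_ind_eq_zero_iff] at h0
  intro i hi hit
  exact h0 i ⟨hit, hi⟩

lemma card_plurB_zero (hm : 2 ≤ 3) (k : ℕ) (t : Bool) :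
    (Finset.univ.filter fun β : Fin (sigmaK k).length → Bool =>
      totalScore (pluralityVec 3 hm) (subProfile (sigmaK k) β t) 1 = 0).card ≤ 2 ^ (k + k) := by
  refine le_trans (Finset.card_le_card ?_) (card_head_forced k t)
  intro β hβ
  rw [Finset.mem_filter] at hβ ⊢
  refine ⟨hβ.1, ?_⟩
  have h0 := hβ.2
  rw [plur_score_b hm, sum_ind_eq_zero_iff] at h0
  intro i hi hit
  exact h0 i ⟨hit, hi⟩

lemma plur_exp_le (hm : 2 ≤ 3) (k : ℕ) (hk : 2 ≤ k) :
    expDisagree (posSWF (pluralityVec 3 hm)) (sigmaK k) ≤ 21 / 16 := by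
  rw [expDisagree, div_le_iff₀ (by positivity)]
  have hsum := Finset.sum_le_sum (s := (Finset.univ : Finset (Fin (sigmaK k).length → Bool)))
    (fun β _ => plur_KT_le hm k β)
  have c0 : (Finset.univ.filter fun β : Fin (sigmaK k).length → Bool =>
      totalScore (pluralityVec 3 hm) (subProfile (sigmaK k) β true) 0 = 0 ∨
      totalScore (pluralityVec 3 hm) (subProfile (sigmaK k) β false) 0 = 0).card
      ≤ 2 ^ k + 2 ^ k := by
    rw [Finset.filter_or]
    exact le_trans (Finset.card_union_le _ _)
      (Nat.add_le_add (card_plurA_zero hm k true) (card_plurA_zero hm k false))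
  have c1 : (Finset.univ.filter fun β : Fin (sigmaK k).length → Bool =>
      totalScore (pluralityVec 3 hm) (subProfile (sigmaK k) β true) 1 = 0 ∨
      totalScore (pluralityVec 3 hm) (subProfile (sigmaK k) β false) 1 = 0).card
      ≤ 2 ^ (k + k) + 2 ^ (k + k) := by
    rw [Finset.filter_or]
    exact le_trans (Finset.card_union_le _ _)
      (Nat.add_le_add (card_plurB_zero hm k true) (card_plurB_zero hm k false))
  rw [Finset.sum_add_distrib, Finset.sum_add_distrib, Finset.sum_const, ← Finset.sum_div,
    ← Finset.sum_div, Finset.sum_boole, Finset.sum_boole] at hsum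
  have hcard : ((Finset.univ : Finset (Fin (sigmaK k).length → Bool)).card • (1:ℝ))
      = 2 ^ (sigmaK k).length := by
    simp only [Finset.card_univ, Fintype.card_fun, Fintype.card_bool, Fintype.card_fin,
      nsmul_eq_mul, mul_one]
    push_cast
    ring
  rw [hcard] at hsum
  have c0' : ((Finset.univ.filter fun β : Fin (sigmaK k).length → Bool =>
      totalScore (pluralityVec 3 hm) (subProfile (sigmaK k) β true) 0 = 0 ∨
      totalScore (pluralityVec 3 hm) (subProfile (sigmaK k) β false) 0 = 0).card : ℝ)
      ≤ 2 ^ k + 2 ^ k := by exact_mod_cast Nat.cast_le.mpr c0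
  have c1' : ((Finset.univ.filter fun β : Fin (sigmaK k).length → Bool =>
      totalScore (pluralityVec 3 hm) (subProfile (sigmaK k) β true) 1 = 0 ∨
      totalScore (pluralityVec 3 hm) (subProfile (sigmaK k) β false) 1 = 0).card : ℝ)
      ≤ 2 ^ (k + k) + 2 ^ (k + k) := by exact_mod_cast Nat.cast_le.mpr c1
  have e1 : (2:ℝ) ^ (sigmaK k).length = 2 ^ (k + k + k) := by rw [sigmaK_length]
  have p1 : (2:ℝ) ^ (k + 4) ≤ 2 ^ (k + k + k) :=
    pow_le_pow_right₀ (by norm_num) (by omega)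
  have p2 : (2:ℝ) ^ (k + k + 2) ≤ 2 ^ (k + k + k) :=
    pow_le_pow_right₀ (by norm_num) (by omega)
  have q1 : (2:ℝ) ^ (k + 4) = 2 ^ k * 16 := by rw [pow_add]; norm_num
  have q2 : (2:ℝ) ^ (k + k + 2) = 2 ^ (k + k) * 4 := by rw [pow_add]; norm_num
  linarith

end Aux14

/-- on the example profile (k ≥ 2), the expected Kendall-Tau disagreement of
veto across a random split is at least 1.5; combined with the bound 1.3125 for plurality,
it follows that `AbC({f_p, f_v}, σ) = {f_p}`. -/
theorem veto_disagreement_bound_and_AbC (k : ℕ) (hk : 2 ≤ k) :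
    (3 / 2 : ℝ) ≤ expDisagree (posSWF (vetoVec 3 (by norm_num))) (sigmaK k) ∧
    expDisagree (posSWF (pluralityVec 3 (by norm_num))) (sigmaK k) ≤ 1.3125 ∧
    AbCVec {pluralityVec 3 (by norm_num), vetoVec 3 (by norm_num)} (sigmaK k)
      = {pluralityVec 3 (by norm_num)} := by
  have hv := veto_exp_ge (by norm_num) k
  have hp := plur_exp_le (by norm_num) k hk
  have h1316 : (1.3125 : ℝ) = 21 / 16 := by norm_num
  refine ⟨hv, by rw [h1316]; exact hp, ?_⟩
  apply Set.eq_singleton_iff_unique_mem.mpr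
  constructor
  · refine ⟨Or.inl rfl, ?_⟩
    rintro sv' (rfl | hsv')
    · exact le_refl _
    · rw [Set.mem_singleton_iff] at hsv'
      subst hsv'
      linarith
  · rintro sv ⟨hsvF, hmin⟩
    rcases hsvF with rfl | hsv
    · rfl
    · rw [Set.mem_singleton_iff] at hsv
      subst hsv
      have := hmin _ (Or.inl rfl)
      linarith

end
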